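/- Let m ≥ 4 and let G = ⟨a, b, c | a^{2^{m-2}} = 1, b^2 = 1, c^2 = 1, ab = ba, ac = ca, c^{-1}bc = a^{2^{m-3}}b⟩ (the group G_4). Then |G| = 2^m, G' = ⟨a^{2^{m-3}}⟩ has order 2, Z(G) = ⟨a⟩ is cyclic of order 2^{m-2}, and cl(G) = 2. -/

import Mathlib

open scoped commutatorElement


/-- The nilpotency class of a group, as the least `n` with `γ_{n+1}(G) = 1`. -/
noncomputable def nilClass (G : Type*) [Group G] : ℕ :=
  sInf {n : ℕ | (⊤ : Subgroup G).lowerCentralSeries n = ⊥}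

/-- Relators of
`G₄ = ⟨a,b,c ∣ a^{2^{m-2}}=1, b²=1, c²=1, ab=ba, ac=ca, c⁻¹bc=a^{2^{m-3}}b⟩`. -/
def G4rels (m : ℕ) : Set (FreeGroup (Fin 3)) :=
  { FreeGroup.of 0 ^ (2 ^ (m - 2)),
    FreeGroup.of 1 ^ 2,
    FreeGroup.of 2 ^ 2,
    FreeGroup.of 0 * FreeGroup.of 1 * (FreeGroup.of 0)⁻¹ * (FreeGroup.of 1)⁻¹,
    FreeGroup.of 0 * FreeGroup.of 2 * (FreeGroup.of 0)⁻¹ * (FreeGroup.of 2)⁻¹,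
    (FreeGroup.of 2)⁻¹ * FreeGroup.of 1 * FreeGroup.of 2
      * (FreeGroup.of 0 ^ (2 ^ (m - 3)) * FreeGroup.of 1)⁻¹ }


/-- Cocycle for the model group. -/
def G4co (n : ℕ) (k j : ZMod 2) : ZMod (2 ^ (n + 2)) :=
  (2 ^ (n + 1) : ℕ) * (k.val * j.val : ℕ)

/-- The model group underlying type. -/
def G4M (n : ℕ) : Type := ZMod (2 ^ (n + 2)) × ZMod 2 × ZMod 2

namespace G4M

variable {n : ℕ}

lemma co_zero_left (j : ZMod 2) : G4co n 0 j = 0 := by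
  simp [G4co, ZMod.val_zero]

lemma co_zero_right (k : ZMod 2) : G4co n k 0 = 0 := by
  simp [G4co, ZMod.val_zero]

lemma two_h_eq_zero : ((2 ^ (n + 1) : ℕ) : ZMod (2 ^ (n + 2))) + (2 ^ (n + 1) : ℕ) = 0 := by
  rw [← Nat.cast_add]
  have : (2 ^ (n + 1) + 2 ^ (n + 1) : ℕ) = 2 ^ (n + 2) := by ring
  rw [this, ZMod.natCast_self]

lemma co_one_one : G4co n 1 1 = (2 ^ (n + 1) : ℕ) := by
  simp [G4co, ZMod.val_one]

lemma zmod2_cases : ∀ k : ZMod 2, k = 0 ∨ k = 1 := by decide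

lemma co_add_left (k k' j : ZMod 2) : G4co n (k + k') j = G4co n k j + G4co n k' j := by
  rcases zmod2_cases k with rfl | rfl
  · rw [co_zero_left, zero_add, zero_add]
  · rcases zmod2_cases k' with rfl | rfl
    · rw [co_zero_left, add_zero, add_zero]
    · have h2 : (1 + 1 : ZMod 2) = 0 := by decide
      rw [h2, co_zero_left]
      rcases zmod2_cases j with rfl | rfl
      · rw [co_zero_right, add_zero]
      · rw [co_one_one, eq_comm, two_h_eq_zero]

lemma co_add_right (k j j' : ZMod 2) : G4co n k (j + j') = G4co n k j + G4co n k j' := by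
  rcases zmod2_cases j with rfl | rfl
  · rw [co_zero_right, zero_add, zero_add]
  · rcases zmod2_cases j' with rfl | rfl
    · rw [co_zero_right, add_zero, add_zero]
    · have h2 : (1 + 1 : ZMod 2) = 0 := by decide
      rw [h2, co_zero_right]
      rcases zmod2_cases k with rfl | rfl
      · rw [co_zero_left, add_zero]
      · rw [co_one_one, eq_comm, two_h_eq_zero]

lemma co_neg_right (k j : ZMod 2) : G4co n k (-j) = G4co n k j := by
  have h : ∀ j : ZMod 2, -j = j := by decide
  rw [h]

instance : Group (G4M n) where
  mul x y := (x.1 + y.1 + G4co n x.2.2 y.2.1, x.2.1 + y.2.1, x.2.2 + y.2.2)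
  one := (0, 0, 0)
  inv x := (-x.1 - G4co n x.2.2 x.2.1, -x.2.1, -x.2.2)
  mul_assoc x y z := by
    show (x.1 + y.1 + G4co n x.2.2 y.2.1 + z.1 + G4co n (x.2.2 + y.2.2) z.2.1,
        x.2.1 + y.2.1 + z.2.1, x.2.2 + y.2.2 + z.2.2)
      = (x.1 + (y.1 + z.1 + G4co n y.2.2 z.2.1) + G4co n x.2.2 (y.2.1 + z.2.1),
        x.2.1 + (y.2.1 + z.2.1), x.2.2 + (y.2.2 + z.2.2))
    refine Prod.ext ?_ (Prod.ext ?_ ?_) <;>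
      simp only [co_add_left, co_add_right] <;> ring
  one_mul x := by
    show (0 + x.1 + G4co n 0 x.2.1, 0 + x.2.1, 0 + x.2.2) = x
    simp [co_zero_left]
    rfl
  mul_one x := by
    show (x.1 + 0 + G4co n x.2.2 0, x.2.1 + 0, x.2.2 + 0) = x
    simp [co_zero_right]
    rfl
  inv_mul_cancel x := by
    have hneg : ∀ j : ZMod 2, -j = j := by decide
    show (-x.1 - G4co n x.2.2 x.2.1 + x.1 + G4co n (-x.2.2) x.2.1,
      -x.2.1 + x.2.1, -x.2.2 + x.2.2) = (0, 0, 0)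
    refine Prod.ext ?_ (Prod.ext ?_ ?_)
    · show -x.1 - G4co n x.2.2 x.2.1 + x.1 + G4co n (-x.2.2) x.2.1 = 0
      rw [hneg]; ring
    · show -x.2.1 + x.2.1 = 0
      ring
    · show -x.2.2 + x.2.2 = 0
      ring

lemma mul_def (x y : G4M n) :
    x * y = (x.1 + y.1 + G4co n x.2.2 y.2.1, x.2.1 + y.2.1, x.2.2 + y.2.2) := rfl

lemma one_def : (1 : G4M n) = (0, 0, 0) := rfl

lemma mul_one' (x : G4M n) : x * 1 = x := mul_one x

lemma inv_def (x : G4M n) :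
    x⁻¹ = (-x.1 - G4co n x.2.2 x.2.1, -x.2.1, -x.2.2) := rfl

end G4M
namespace G4M

variable {n : ℕ}

/-- the model generators -/
def X : G4M n := (1, 0, 0)
def B : G4M n := (0, 1, 0)
def C : G4M n := (0, 0, 1)

lemma X_pow (s : ℕ) : (X ^ s : G4M n) = ((s : ZMod (2 ^ (n + 2))), 0, 0) := by
  induction s with
  | zero => rw [pow_zero, Nat.cast_zero]; rfl
  | succ t ih =>
      rw [pow_succ, mul_def, ih, X]
      refine Prod.ext ?_ (Prod.ext ?_ ?_)
      · show (t : ZMod (2 ^ (n + 2))) + 1 + G4co n 0 0 = ((t : ℕ) + 1 : ℕ)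
        rw [co_zero_left]; push_cast; ring
      · show (0 : ZMod 2) + 0 = 0; ring
      · show (0 : ZMod 2) + 0 = 0; ring

lemma B_inv : (B⁻¹ : G4M n) = B := by
  rw [inv_def, B]
  refine Prod.ext ?_ (Prod.ext ?_ ?_)
  · show -0 - G4co n 0 1 = 0; rw [co_zero_left]; ring
  · show -(1 : ZMod 2) = 1; decide
  · show -(0 : ZMod 2) = 0; decide

lemma C_inv : (C⁻¹ : G4M n) = C := by
  rw [inv_def, C]
  refine Prod.ext ?_ (Prod.ext ?_ ?_)
  · show -0 - G4co n 1 0 = 0; rw [co_zero_right]; ring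
  · show -(0 : ZMod 2) = 0; decide
  · show -(1 : ZMod 2) = 1; decide

lemma X_inv : (X⁻¹ : G4M n) = (-1, 0, 0) := by
  rw [inv_def, X]
  refine Prod.ext ?_ (Prod.ext ?_ ?_)
  · show -1 - G4co n 0 0 = -1; rw [co_zero_left]; ring
  · show -(0 : ZMod 2) = 0; decide
  · show -(0 : ZMod 2) = 0; decide

lemma B_sq : (B ^ 2 : G4M n) = 1 := by
  rw [pow_two, mul_def, B, one_def]
  refine Prod.ext ?_ (Prod.ext ?_ ?_)
  · show (0 : ZMod (2^(n+2))) + 0 + G4co n 0 1 = 0; rw [co_zero_left]; ring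
  · show (1 : ZMod 2) + 1 = 0; decide
  · show (0 : ZMod 2) + 0 = 0; decide

lemma C_sq : (C ^ 2 : G4M n) = 1 := by
  rw [pow_two, mul_def, C, one_def]
  refine Prod.ext ?_ (Prod.ext ?_ ?_)
  · show (0 : ZMod (2^(n+2))) + 0 + G4co n 1 0 = 0; rw [co_zero_right]; ring
  · show (0 : ZMod 2) + 0 = 0; decide
  · show (1 : ZMod 2) + 1 = 0; decide

lemma X_comm_B : (X * B : G4M n) = B * X := by
  rw [mul_def, mul_def, X, B]
  refine Prod.ext ?_ (Prod.ext ?_ ?_)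
  · show (1 : ZMod (2^(n+2))) + 0 + G4co n 0 1 = 0 + 1 + G4co n 0 0
    rw [co_zero_left, co_zero_left]; ring
  · show (0 : ZMod 2) + 1 = 1 + 0; decide
  · show (0 : ZMod 2) + 0 = 0 + 0; decide

lemma X_comm_C : (X * C : G4M n) = C * X := by
  rw [mul_def, mul_def, X, C]
  refine Prod.ext ?_ (Prod.ext ?_ ?_)
  · show (1 : ZMod (2^(n+2))) + 0 + G4co n 0 0 = 0 + 1 + G4co n 1 0
    rw [co_zero_left, co_zero_right]; ring
  · show (0 : ZMod 2) + 0 = 0 + 0; decide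
  · show (0 : ZMod 2) + 1 = 1 + 0; decide

lemma C_mul_B : (C * B : G4M n) = X ^ (2 ^ (n + 1)) * B * C := by
  rw [mul_def, mul_def, mul_def, X_pow, B, C]
  refine Prod.ext ?_ (Prod.ext ?_ ?_)
  · show (0 : ZMod (2^(n+2))) + 0 + G4co n 1 1
      = ((2^(n+1) : ℕ) : ZMod (2^(n+2))) + 0 + G4co n 0 1 + 0 + G4co n 1 0
    rw [co_one_one, co_zero_left, co_zero_right]; ring
  · show (0 : ZMod 2) + 1 = 0 + 1 + 0; decide
  · show (1 : ZMod 2) + 0 = 0 + 0 + 1; decide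

end G4M
namespace G4proof

open PresentedGroup Subgroup

/-- generator images in the model -/
def fmap (n : ℕ) : Fin 3 → G4M n := ![G4M.X, G4M.B, G4M.C]

lemma hrels (n : ℕ) : ∀ r ∈ G4rels (n + 4), FreeGroup.lift (fmap n) r = 1 := by
  have e2 : n + 4 - 2 = n + 2 := by omega
  have e3 : n + 4 - 3 = n + 1 := by omega
  intro r hr
  simp only [G4rels, Set.mem_insert_iff, Set.mem_singleton_iff] at hr
  rcases hr with rfl | rfl | rfl | rfl | rfl | rfl
  · rw [map_pow, FreeGroup.lift_apply_of, e2]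
    show (G4M.X ^ (2 ^ (n + 2)) : G4M n) = 1
    rw [G4M.X_pow, ZMod.natCast_self, G4M.one_def]
  · rw [map_pow, FreeGroup.lift_apply_of]
    exact G4M.B_sq
  · rw [map_pow, FreeGroup.lift_apply_of]
    exact G4M.C_sq
  · simp only [map_mul, map_inv, FreeGroup.lift_apply_of]
    show G4M.X * G4M.B * G4M.X⁻¹ * G4M.B⁻¹ = 1
    rw [G4M.X_comm_B]; group
  · simp only [map_mul, map_inv, FreeGroup.lift_apply_of]
    show G4M.X * G4M.C * G4M.X⁻¹ * G4M.C⁻¹ = 1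
    rw [G4M.X_comm_C]; group
  · simp only [map_mul, map_inv, map_pow, FreeGroup.lift_apply_of]
    show G4M.C⁻¹ * G4M.B * G4M.C * (G4M.X ^ 2 ^ (n + 4 - 3) * G4M.B)⁻¹ = 1
    rw [e3, mul_inv_eq_one, G4M.C_inv, G4M.C_mul_B, mul_assoc,
      show (G4M.C * G4M.C : G4M n) = 1 from by rw [← pow_two]; exact G4M.C_sq, mul_one]

/-- the homomorphism to the model -/
noncomputable def φ (n : ℕ) : PresentedGroup (G4rels (n + 4)) →* G4M n :=
  PresentedGroup.toGroup (hrels n)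

lemma φ_a (n : ℕ) : φ n (.of 0) = G4M.X := PresentedGroup.toGroup.of _
lemma φ_b (n : ℕ) : φ n (.of 1) = G4M.B := PresentedGroup.toGroup.of _
lemma φ_c (n : ℕ) : φ n (.of 2) = G4M.C := PresentedGroup.toGroup.of _

section Grels

variable (n : ℕ)

local notation "a" => (PresentedGroup.of 0 : PresentedGroup (G4rels (n + 4)))
local notation "b" => (PresentedGroup.of 1 : PresentedGroup (G4rels (n + 4)))
local notation "c" => (PresentedGroup.of 2 : PresentedGroup (G4rels (n + 4)))

lemma mk_rel {r : FreeGroup (Fin 3)} (hr : r ∈ G4rels (n + 4)) :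
    PresentedGroup.mk (G4rels (n + 4)) r = 1 :=
  (QuotientGroup.eq_one_iff r).mpr (Subgroup.subset_normalClosure hr)

lemma rel_a : a ^ (2 ^ (n + 2)) = 1 := by
  have h := mk_rel n (show FreeGroup.of 0 ^ 2 ^ (n + 4 - 2) ∈ G4rels (n + 4) from
    Set.mem_insert _ _)
  rw [map_pow] at h
  rwa [show n + 4 - 2 = n + 2 by omega] at h

lemma rel_b : b ^ 2 = 1 := by
  have h := mk_rel n (show FreeGroup.of 1 ^ 2 ∈ G4rels (n + 4) from
    Set.mem_insert_iff.2 (Or.inr (Set.mem_insert _ _)))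
  rwa [map_pow] at h

lemma rel_c : c ^ 2 = 1 := by
  have h := mk_rel n (show FreeGroup.of 2 ^ 2 ∈ G4rels (n + 4) from
    Set.mem_insert_iff.2 (Or.inr (Set.mem_insert_iff.2 (Or.inr (Set.mem_insert _ _)))))
  rwa [map_pow] at h

lemma rel_ab : Commute a b := by
  have h := mk_rel n (show FreeGroup.of 0 * FreeGroup.of 1 * (FreeGroup.of 0)⁻¹ *
      (FreeGroup.of 1)⁻¹ ∈ G4rels (n + 4) from
    Set.mem_insert_iff.2 (Or.inr (Set.mem_insert_iff.2 (Or.inr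
      (Set.mem_insert_iff.2 (Or.inr (Set.mem_insert _ _)))))))
  simp only [map_mul, map_inv] at h
  have := mul_eq_one_iff_eq_inv.mp h
  rw [inv_inv] at this
  have h2 := mul_inv_eq_iff_eq_mul.mp this
  exact h2

lemma rel_ac : Commute a c := by
  have h := mk_rel n (show FreeGroup.of 0 * FreeGroup.of 2 * (FreeGroup.of 0)⁻¹ *
      (FreeGroup.of 2)⁻¹ ∈ G4rels (n + 4) from
    Set.mem_insert_iff.2 (Or.inr (Set.mem_insert_iff.2 (Or.inr
      (Set.mem_insert_iff.2 (Or.inr (Set.mem_insert_iff.2 (Or.inr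
        (Set.mem_insert _ _)))))))))
  simp only [map_mul, map_inv] at h
  have := mul_eq_one_iff_eq_inv.mp h
  rw [inv_inv] at this
  exact mul_inv_eq_iff_eq_mul.mp this

lemma rel_cb : c * b = a ^ (2 ^ (n + 1)) * b * c := by
  have h := mk_rel n (show (FreeGroup.of 2)⁻¹ * FreeGroup.of 1 * FreeGroup.of 2 *
      (FreeGroup.of 0 ^ (2 ^ (n + 4 - 3)) * FreeGroup.of 1)⁻¹ ∈ G4rels (n + 4) from by
    simp only [G4rels, Set.mem_insert_iff, Set.mem_singleton_iff]; tauto)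
  simp only [map_mul, map_inv, map_pow] at h
  rw [show n + 4 - 3 = n + 1 by omega] at h
  rw [mul_inv_eq_one] at h
  have h' : c⁻¹ * b * c = a ^ 2 ^ (n + 1) * b := h
  have hcinv : (c : PresentedGroup (G4rels (n+4)))⁻¹ = c :=
    inv_eq_of_mul_eq_one_right (by rw [← pow_two]; exact rel_c n)
  rw [hcinv] at h'
  calc c * b = c * b * c * c⁻¹ := by group
    _ = a ^ 2 ^ (n + 1) * b * c⁻¹ := by rw [mul_assoc c b c, ← mul_assoc, h']
    _ = a ^ 2 ^ (n + 1) * b * c := by rw [hcinv]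

end Grels

end G4proof
namespace G4proof

open PresentedGroup Subgroup

lemma powval {H : Type*} [Group H] (x : H) {k : ℕ} [NeZero k] (hx : x ^ k = 1) (s : ℕ) :
    x ^ s = x ^ ((s : ZMod k).val) := by
  rw [ZMod.val_natCast]
  conv_lhs => rw [← Nat.div_add_mod s k]
  rw [pow_add, pow_mul, hx, one_pow, one_mul]

instance (n : ℕ) : NeZero (2 ^ (n + 2)) := ⟨pow_ne_zero _ two_ne_zero⟩

section Grels2

variable (n : ℕ)

local notation "a" => (PresentedGroup.of 0 : PresentedGroup (G4rels (n + 4)))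
local notation "b" => (PresentedGroup.of 1 : PresentedGroup (G4rels (n + 4)))
local notation "c" => (PresentedGroup.of 2 : PresentedGroup (G4rels (n + 4)))

lemma a_central (g : PresentedGroup (G4rels (n + 4))) : Commute a g := by
  have hg : g ∈ Subgroup.centralizer {(a : PresentedGroup (G4rels (n + 4)))} := by
    refine PresentedGroup.generated_by _ _ ?_ g
    intro j
    rw [Subgroup.mem_centralizer_iff]
    fin_cases j <;> intro h hh <;> rw [Set.mem_singleton_iff] at hh <;> subst hh
    · rfl
    · exact (rel_ab n).eq
    · exact (rel_ac n).eq
  exact Subgroup.mem_centralizer_iff.mp hg a rfl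

lemma a_pow_comm (s : ℕ) (g : PresentedGroup (G4rels (n + 4))) : a ^ s * g = g * a ^ s :=
  ((a_central n g).pow_left s).eq

/-- normal form map -/
def gfun : G4M n → PresentedGroup (G4rels (n + 4)) := fun x =>
  a ^ x.1.val * b ^ x.2.1.val * c ^ x.2.2.val

lemma gfun_one : gfun n (0, 0, 0) = 1 := by
  unfold gfun
  simp [ZMod.val_zero]

lemma a_pow_val (s : ℕ) : a ^ s = a ^ ((s : ZMod (2 ^ (n + 2))).val) :=
  powval _ (rel_a n) s

lemma b_pow_val (s : ℕ) : b ^ s = b ^ ((s : ZMod 2).val) :=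
  powval _ (rel_b n) s

lemma c_pow_val (s : ℕ) : c ^ s = c ^ ((s : ZMod 2).val) :=
  powval _ (rel_c n) s

lemma cast_val_add_one (i : ZMod (2 ^ (n + 2))) :
    ((1 + i.val : ℕ) : ZMod (2 ^ (n + 2))) = i + 1 := by
  push_cast
  rw [ZMod.natCast_val, ZMod.cast_id]
  ring

lemma ga_mul (i : ZMod (2 ^ (n + 2))) (j k : ZMod 2) :
    a * gfun n (i, j, k) = gfun n (i + 1, j, k) := by
  unfold gfun
  rw [← mul_assoc, ← mul_assoc, ← pow_succ']
  congr 2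
  rw [show i.val + 1 = 1 + i.val by ring, a_pow_val n (1 + i.val), cast_val_add_one]

lemma gb_mul (i : ZMod (2 ^ (n + 2))) (j k : ZMod 2) :
    b * gfun n (i, j, k) = gfun n (i, j + 1, k) := by
  unfold gfun
  rw [← mul_assoc, ← mul_assoc, ← a_pow_comm n i.val b, mul_assoc (a ^ i.val), ← pow_succ']
  congr 2
  rw [show j.val + 1 = 1 + j.val by ring, b_pow_val n (1 + j.val)]
  congr 1
  have : ((1 + j.val : ℕ) : ZMod 2) = j + 1 := by
    push_cast
    rw [ZMod.natCast_val, ZMod.cast_id]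
    ring
  rw [this]

lemma gc_mul (i : ZMod (2 ^ (n + 2))) (j k : ZMod 2) :
    c * gfun n (i, j, k) = gfun n (i + G4co n 1 j, j, k + 1) := by
  unfold gfun
  have hck : c * c ^ k.val = c ^ ((k + 1 : ZMod 2)).val := by
    rw [← pow_succ', show k.val + 1 = 1 + k.val by ring, c_pow_val n (1 + k.val)]
    congr 1
    push_cast
    rw [ZMod.natCast_val, ZMod.cast_id]
    ring
  rcases G4M.zmod2_cases j with rfl | rfl
  · rw [G4M.co_zero_right, add_zero]
    show c * (a ^ i.val * b ^ (0 : ZMod 2).val * c ^ k.val)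
        = a ^ i.val * b ^ (0 : ZMod 2).val * c ^ ((k + 1 : ZMod 2)).val
    rw [show ((0 : ZMod 2)).val = 0 from rfl, pow_zero, mul_one,
      ← mul_assoc, ← a_pow_comm n i.val c, mul_assoc, hck]
  · show c * (a ^ i.val * b ^ (1 : ZMod 2).val * c ^ k.val) = _
    rw [show ((1 : ZMod 2)).val = 1 from rfl, pow_one]
    rw [← mul_assoc, ← mul_assoc, ← a_pow_comm n i.val c, mul_assoc (a ^ i.val) c b,
      rel_cb n]
    -- now : a ^ i.val * (a ^ 2^(n+1) * b * c) * c ^ k.val = target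
    have hco : G4co n 1 1 = ((2 ^ (n + 1) : ℕ) : ZMod (2 ^ (n + 2))) := G4M.co_one_one
    rw [hco]
    have hexp : a ^ i.val * a ^ (2 ^ (n + 1)) =
        a ^ ((i + ((2 ^ (n + 1) : ℕ) : ZMod (2 ^ (n + 2)))).val) := by
      rw [← pow_add, a_pow_val n (i.val + 2 ^ (n + 1))]
      congr 1
      push_cast
      rw [ZMod.natCast_val, ZMod.cast_id]
    calc a ^ i.val * (a ^ 2 ^ (n + 1) * b * c) * c ^ k.val
        = (a ^ i.val * a ^ 2 ^ (n + 1)) * b * (c * c ^ k.val) := by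
          simp only [mul_assoc]
      _ = a ^ ((i + ((2 ^ (n + 1) : ℕ) : ZMod (2 ^ (n + 2)))).val) * b
            * c ^ ((k + 1 : ZMod 2)).val := by rw [hexp, hck]

lemma gfun_surjective : Function.Surjective (gfun n) := by
  have hstep : ∀ (t : Fin 3) (x : G4M n), ∃ y, PresentedGroup.of t * gfun n x = gfun n y := by
    intro t x
    obtain ⟨i, j, k⟩ := x
    fin_cases t
    · exact ⟨_, ga_mul n i j k⟩
    · exact ⟨_, gb_mul n i j k⟩
    · exact ⟨_, gc_mul n i j k⟩
  have hstepinv : ∀ (t : Fin 3) (x : G4M n),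
      ∃ y, (PresentedGroup.of t)⁻¹ * gfun n x = gfun n y := by
    intro t x
    obtain ⟨i, j, k⟩ := x
    fin_cases t
    · refine ⟨(i - 1, j, k), ?_⟩
      have h := ga_mul n (i - 1) j k
      rw [sub_add_cancel] at h
      rw [← h]
      exact inv_mul_cancel_left _ _
    · refine ⟨(i, j - 1, k), ?_⟩
      have h := gb_mul n i (j - 1) k
      rw [sub_add_cancel] at h
      rw [← h]
      exact inv_mul_cancel_left _ _
    · refine ⟨(i - G4co n 1 j, j, k - 1), ?_⟩
      have h := gc_mul n (i - G4co n 1 j) j (k - 1)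
      rw [sub_add_cancel, sub_add_cancel] at h
      rw [← h]
      exact inv_mul_cancel_left _ _
  have key : ∀ L : List (Fin 3 × Bool),
      ∃ y, PresentedGroup.mk (G4rels (n + 4)) (FreeGroup.mk L) = gfun n y := by
    intro L
    induction L with
    | nil =>
        refine ⟨(0, 0, 0), ?_⟩
        rw [← FreeGroup.one_eq_mk, map_one, gfun_one]
    | cons hd tl ih =>
        obtain ⟨y, hy⟩ := ih
        obtain ⟨t, bb⟩ := hd
        have hsplit : FreeGroup.mk ((t, bb) :: tl) = FreeGroup.mk [(t, bb)] * FreeGroup.mk tl := by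
          rw [FreeGroup.mul_mk]
          rfl
        cases bb
        · have hof : FreeGroup.mk [(t, false)] = (FreeGroup.of t)⁻¹ := by
            rw [show (FreeGroup.of t : FreeGroup (Fin 3)) = FreeGroup.mk [(t, true)] from rfl,
              FreeGroup.inv_mk]
            rfl
          rw [hsplit, hof, map_mul, map_inv, hy]
          exact hstepinv t y
        · have hof : FreeGroup.mk [(t, true)] = FreeGroup.of t := rfl
          rw [hsplit, hof, map_mul, hy]
          exact hstep t y
  intro g
  induction g using PresentedGroup.induction_on with
  | _ w =>
      obtain ⟨L⟩ := w
      obtain ⟨y, hy⟩ := key L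
      exact ⟨y, hy.symm⟩

end Grels2

end G4proof
namespace G4proof

open PresentedGroup Subgroup

variable {n : ℕ}

instance : Finite (G4M n) :=
  inferInstanceAs (Finite (ZMod (2 ^ (n + 2)) × ZMod 2 × ZMod 2))

lemma card_model (n : ℕ) : Nat.card (G4M n) = 2 ^ (n + 4) := by
  have : Nat.card (G4M n) = Nat.card (ZMod (2 ^ (n + 2)) × ZMod 2 × ZMod 2) := rfl
  rw [this, Nat.card_prod, Nat.card_prod, Nat.card_zmod, Nat.card_zmod]
  ring

lemma h_ne_zero (n : ℕ) : ((2 ^ (n + 1) : ℕ) : ZMod (2 ^ (n + 2))) ≠ 0 := by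
  intro h0
  have := (ZMod.natCast_eq_zero_iff _ _).mp h0
  have hle := Nat.le_of_dvd (by positivity) this
  have : (2 : ℕ) ^ (n + 1) < 2 ^ (n + 2) := Nat.pow_lt_pow_right one_lt_two (by omega)
  omega

lemma X_ne_pow_h (n : ℕ) : (G4M.X ^ (2 ^ (n + 1)) : G4M n) ≠ 1 := by
  rw [G4M.X_pow, G4M.one_def]
  intro h
  exact h_ne_zero n (congrArg Prod.fst h)

lemma orderOf_X (n : ℕ) : orderOf (G4M.X : G4M n) = 2 ^ (n + 2) := by
  refine Nat.dvd_antisymm ?_ ?_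
  · exact orderOf_dvd_of_pow_eq_one (by rw [G4M.X_pow, ZMod.natCast_self, G4M.one_def])
  · have h1 : (G4M.X ^ (orderOf (G4M.X : G4M n)) : G4M n) = 1 := pow_orderOf_eq_one _
    rw [G4M.X_pow, G4M.one_def] at h1
    exact (ZMod.natCast_eq_zero_iff _ _).mp (congrArg Prod.fst h1)

lemma co_cases (k j : ZMod 2) :
    G4co n k j = 0 ∨ G4co n k j = ((2 ^ (n + 1) : ℕ) : ZMod (2 ^ (n + 2))) := by
  rcases G4M.zmod2_cases k with rfl | rfl
  · exact Or.inl (G4M.co_zero_left j)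
  · rcases G4M.zmod2_cases j with rfl | rfl
    · exact Or.inl (G4M.co_zero_right 1)
    · exact Or.inr G4M.co_one_one

lemma commElt_model (u v : G4M n) :
    ⁅u, v⁆ = (G4co n u.2.2 v.2.1 + G4co n v.2.2 u.2.1, 0, 0) := by
  obtain ⟨i, j, k⟩ := u
  obtain ⟨i', j', k'⟩ := v
  have hneg : ∀ j : ZMod 2, -j = j := by decide
  erw [commutatorElement_def]
  erw [G4M.mul_def, G4M.inv_def, G4M.mul_def, G4M.inv_def, G4M.mul_def]
  refine Prod.ext ?_ (Prod.ext ?_ ?_)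
  · have h2 : ∀ x y : ZMod 2, x + y + x = y := by decide
    simp only [hneg]
    rw [h2, G4M.co_add_left]
    ring
  · show j + j' + -j + -j' = 0
    ring
  · show k + k' + -k + -k' = 0
    ring

lemma comm_model (u v : G4M n) :
    ∃ z : ℤ, ⁅u, v⁆ = ((G4M.X ^ (2 ^ (n + 1)) : G4M n)) ^ z := by
  rw [commElt_model]
  have hX : (G4M.X ^ (2 ^ (n + 1)) : G4M n)
      = (((2 ^ (n + 1) : ℕ) : ZMod (2 ^ (n + 2))), 0, 0) := G4M.X_pow _
  rcases co_cases (n := n) u.2.2 v.2.1 with h1 | h1 <;>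
    rcases co_cases (n := n) v.2.2 u.2.1 with h2 | h2 <;> rw [h1, h2]
  · exact ⟨0, by rw [zpow_zero, G4M.one_def, add_zero]⟩
  · exact ⟨1, by rw [zpow_one, hX, zero_add]⟩
  · exact ⟨1, by rw [zpow_one, hX, add_zero]⟩
  · refine ⟨0, ?_⟩
    rw [zpow_zero, G4M.one_def, G4M.two_h_eq_zero]

lemma center_model (u : G4M n)
    (hB : u * G4M.B = G4M.B * u) (hC : u * G4M.C = G4M.C * u) :
    u = (u.1, 0, 0) := by
  obtain ⟨i, j, k⟩ := u
  rw [G4M.mul_def (i, j, k), G4M.mul_def _ (i, j, k), G4M.B] at hB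
  rw [G4M.mul_def (i, j, k), G4M.mul_def _ (i, j, k), G4M.C] at hC
  have hk' : i + G4co n k 1 = i + G4co n 0 j := by
    have := congrArg Prod.fst hB
    simpa using this
  have hj' : i + G4co n k 0 = i + G4co n 1 j := by
    have := congrArg Prod.fst hC
    simpa using this
  have hk : G4co n k 1 = G4co n 0 j := add_left_cancel hk'
  have hj : G4co n k 0 = G4co n 1 j := add_left_cancel hj' 
  rw [G4M.co_zero_left] at hk
  rw [G4M.co_zero_right] at hj
  have hk0 : k = 0 := by
    rcases G4M.zmod2_cases k with rfl | rfl
    · rfl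
    · rw [G4M.co_one_one] at hk
      exact absurd hk (h_ne_zero n)
  have hj0 : j = 0 := by
    rcases G4M.zmod2_cases j with rfl | rfl
    · rfl
    · rw [G4M.co_one_one] at hj
      exact absurd hj.symm (h_ne_zero n)
  rw [hk0, hj0]

lemma X_pow_val (u : ZMod (2 ^ (n + 2))) : ((u, 0, 0) : G4M n) = G4M.X ^ u.val := by
  rw [G4M.X_pow, ZMod.natCast_val, ZMod.cast_id]

end G4proof
namespace G4proof

open PresentedGroup Subgroup

lemma isCyclic_zpowers {H : Type*} [Group H] (g : H) : IsCyclic (Subgroup.zpowers g) := by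
  constructor
  refine ⟨⟨g, Subgroup.mem_zpowers g⟩, ?_⟩
  rintro ⟨x, hx⟩
  obtain ⟨z, rfl⟩ := Subgroup.mem_zpowers_iff.mp hx
  refine Subgroup.mem_zpowers_iff.mpr ⟨z, ?_⟩
  ext
  simp

section Final

variable (n : ℕ)

local notation "a" => (PresentedGroup.of 0 : PresentedGroup (G4rels (n + 4)))
local notation "b" => (PresentedGroup.of 1 : PresentedGroup (G4rels (n + 4)))
local notation "c" => (PresentedGroup.of 2 : PresentedGroup (G4rels (n + 4)))

lemma model_norm (x : G4M n) :
    G4M.X ^ x.1.val * G4M.B ^ x.2.1.val * G4M.C ^ x.2.2.val = x := by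
  obtain ⟨i, j, k⟩ := x
  show G4M.X ^ i.val * G4M.B ^ j.val * G4M.C ^ k.val = _
  rw [← X_pow_val]
  rcases G4M.zmod2_cases j with rfl | rfl <;> rcases G4M.zmod2_cases k with rfl | rfl
  · rw [show ((0 : ZMod 2)).val = 0 from rfl, pow_zero, pow_zero, mul_one, G4M.mul_one' ((i, 0, 0) : G4M n)]
  · rw [show ((0 : ZMod 2)).val = 0 from rfl, show ((1 : ZMod 2)).val = 1 from rfl,
      pow_zero, pow_one, G4M.mul_one' ((i, 0, 0) : G4M n), G4M.mul_def ((i, 0, 0) : G4M n), G4M.C]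
    refine Prod.ext ?_ (Prod.ext ?_ ?_)
    · show i + 0 + G4co n 0 0 = i
      rw [G4M.co_zero_left]; ring
    · show (0 : ZMod 2) + 0 = 0; ring
    · show (0 : ZMod 2) + 1 = 1; ring
  · rw [show ((0 : ZMod 2)).val = 0 from rfl, show ((1 : ZMod 2)).val = 1 from rfl,
      pow_zero, pow_one, mul_one, G4M.mul_def ((i, 0, 0) : G4M n), G4M.B]
    refine Prod.ext ?_ (Prod.ext ?_ ?_)
    · show i + 0 + G4co n 0 1 = i
      rw [G4M.co_zero_left]; ring
    · show (0 : ZMod 2) + 1 = 1; ring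
    · show (0 : ZMod 2) + 0 = 0; ring
  · rw [show ((1 : ZMod 2)).val = 1 from rfl, pow_one, pow_one, G4M.mul_def _ G4M.C,
      G4M.mul_def ((i, 0, 0) : G4M n), G4M.B, G4M.C]
    refine Prod.ext ?_ (Prod.ext ?_ ?_)
    · show i + 0 + G4co n 0 1 + 0 + G4co n 0 0 = i
      rw [G4M.co_zero_left, G4M.co_zero_left]; ring
    · show (0 : ZMod 2) + 1 + 0 = 1; ring
    · show (0 : ZMod 2) + 0 + 1 = 1; ring

lemma φ_gfun (y : G4M n) : φ n (gfun n y) = y := by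
  unfold gfun
  rw [map_mul, map_mul, map_pow, map_pow, map_pow, φ_a, φ_b, φ_c, model_norm]

lemma φ_surjective : Function.Surjective (φ n) := fun y => ⟨gfun n y, φ_gfun n y⟩

lemma φ_injective : Function.Injective (φ n) := by
  intro x1 x2 h
  obtain ⟨y1, rfl⟩ := gfun_surjective n x1
  obtain ⟨y2, rfl⟩ := gfun_surjective n x2
  rw [φ_gfun, φ_gfun] at h
  rw [h]

/-- the isomorphism with the model -/
noncomputable def eqv : PresentedGroup (G4rels (n + 4)) ≃* G4M n :=
  MulEquiv.ofBijective (φ n) ⟨φ_injective n, φ_surjective n⟩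

lemma card_G : Nat.card (PresentedGroup (G4rels (n + 4))) = 2 ^ (n + 4) := by
  rw [Nat.card_congr (eqv n).toEquiv, card_model]

lemma commutator_G :
    commutator (PresentedGroup (G4rels (n + 4))) = Subgroup.zpowers (a ^ 2 ^ (n + 1)) := by
  apply le_antisymm
  · rw [commutator_def, Subgroup.commutator_le]
    intro g1 _ g2 _
    obtain ⟨z, hz⟩ := comm_model (φ n g1) (φ n g2)
    have hφ : φ n ⁅g1, g2⁆ = φ n ((a ^ 2 ^ (n + 1)) ^ z) := by
      rw [map_commutatorElement, hz, map_zpow, map_pow, φ_a]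
    have heq := φ_injective n hφ
    rw [heq]
    exact Subgroup.zpow_mem _ (Subgroup.mem_zpowers _) z
  · rw [Subgroup.zpowers_le]
    have hab : (a ^ 2 ^ (n + 1) : PresentedGroup (G4rels (n + 4))) = ⁅c, b⁆ := by
      rw [commutatorElement_def, rel_cb n]
      group
    rw [hab, _root_.commutator_def]
    exact Subgroup.commutator_mem_commutator (Subgroup.mem_top _) (Subgroup.mem_top _)

lemma orderOf_a : orderOf (a : PresentedGroup (G4rels (n + 4))) = 2 ^ (n + 2) := by
  rw [← orderOf_injective (φ n) (φ_injective n), φ_a, orderOf_X]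

lemma ah_ne_one : (a ^ 2 ^ (n + 1) : PresentedGroup (G4rels (n + 4))) ≠ 1 := by
  intro h
  apply X_ne_pow_h n
  rw [← φ_a (n := n), ← map_pow, h, map_one]

lemma card_commutator_G :
    Nat.card (commutator (PresentedGroup (G4rels (n + 4)))) = 2 := by
  rw [commutator_G, Nat.card_zpowers]
  refine orderOf_eq_prime ?_ (ah_ne_one n)
  rw [← pow_mul, show 2 ^ (n + 1) * 2 = 2 ^ (n + 2) by ring]
  exact rel_a n

lemma center_G :
    Subgroup.center (PresentedGroup (G4rels (n + 4))) = Subgroup.zpowers a := by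
  apply le_antisymm
  · intro x hx
    have hB : φ n x * G4M.B = G4M.B * φ n x := by
      rw [← φ_b, ← map_mul, ← map_mul, Subgroup.mem_center_iff.mp hx b]
    have hC : φ n x * G4M.C = G4M.C * φ n x := by
      rw [← φ_c, ← map_mul, ← map_mul, Subgroup.mem_center_iff.mp hx c]
    have hform := center_model (φ n x) hB hC
    rw [X_pow_val] at hform
    have : φ n x = φ n (a ^ (φ n x).1.val) := by rw [map_pow, φ_a]; exact hform
    rw [φ_injective n this]
    exact Subgroup.pow_mem _ (Subgroup.mem_zpowers _) _
  · rw [Subgroup.zpowers_le]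
    exact Subgroup.mem_center_iff.mpr fun g => (a_central n g).eq.symm

lemma center_isCyclic :
    IsCyclic (Subgroup.center (PresentedGroup (G4rels (n + 4)))) := by
  rw [center_G]
  exact isCyclic_zpowers _

lemma card_center_G :
    Nat.card (Subgroup.center (PresentedGroup (G4rels (n + 4)))) = 2 ^ (n + 2) := by
  rw [center_G, Nat.card_zpowers, orderOf_a]

lemma finite_G : Finite (PresentedGroup (G4rels (n + 4))) :=
  Finite.of_surjective (gfun n) (gfun_surjective n)

lemma nontrivial_G : Nontrivial (PresentedGroup (G4rels (n + 4))) := by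
  have := finite_G n
  rw [← Finite.one_lt_card_iff_nontrivial, card_G]
  exact Nat.one_lt_two_pow_iff.mpr (by omega)

lemma nilClass_G : nilClass (PresentedGroup (G4rels (n + 4))) = 2 := by
  have := nontrivial_G n
  have h2 : (⊤ : Subgroup (PresentedGroup (G4rels (n + 4)))).lowerCentralSeries 2 = ⊥ := by
    refine Subgroup.lowerCentralSeries_succ_eq_bot ⊤ ?_
    rw [Subgroup.top_lowerCentralSeries_one, commutator_G, Subgroup.zpowers_le, center_G]
    exact Subgroup.pow_mem _ (Subgroup.mem_zpowers _) _
  have h1 : (⊤ : Subgroup (PresentedGroup (G4rels (n + 4)))).lowerCentralSeries 1 ≠ ⊥ := by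
    rw [Subgroup.top_lowerCentralSeries_one, commutator_G]
    exact Subgroup.zpowers_ne_bot.mpr (ah_ne_one n)
  have h0 : (⊤ : Subgroup (PresentedGroup (G4rels (n + 4)))).lowerCentralSeries 0 ≠ ⊥ := by
    rw [Subgroup.lowerCentralSeries_zero]
    intro hbot
    obtain ⟨x, y, hxy⟩ := this
    apply hxy
    have hx : x ∈ (⊥ : Subgroup (PresentedGroup (G4rels (n + 4)))) := hbot ▸ Subgroup.mem_top x
    have hy : y ∈ (⊥ : Subgroup (PresentedGroup (G4rels (n + 4)))) := hbot ▸ Subgroup.mem_top y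
    rw [Subgroup.mem_bot] at hx hy
    rw [hx, hy]
  unfold nilClass
  have hmem : 2 ∈ {k : ℕ | (⊤ : Subgroup (PresentedGroup (G4rels (n + 4)))).lowerCentralSeries k = ⊥} := h2
  apply le_antisymm (Nat.sInf_le hmem)
  by_contra hlt
  push_neg at hlt
  have hsmem := Nat.sInf_mem (Set.nonempty_of_mem hmem)
  have hcase : sInf {k : ℕ | (⊤ : Subgroup (PresentedGroup (G4rels (n + 4)))).lowerCentralSeries k = ⊥} = 0
      ∨ sInf {k : ℕ | (⊤ : Subgroup (PresentedGroup (G4rels (n + 4)))).lowerCentralSeries k = ⊥} = 1 := by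
    omega
  rcases hcase with h | h <;> rw [h] at hsmem
  · exact h0 hsmem
  · exact h1 hsmem

end Final

end G4proof

/-- For `m ≥ 4` the group `G₄` has order `2^m`, commutator subgroup
`⟨a^{2^{m-3}}⟩` of order 2, center `⟨a⟩` cyclic of order `2^{m-2}`, and
nilpotency class 2. -/
theorem G4_invariants (m : ℕ) (hm : 4 ≤ m) :
    let G := PresentedGroup (G4rels m)
    let a : G := PresentedGroup.of 0
    Nat.card G = 2 ^ m
    ∧ commutator G = Subgroup.zpowers (a ^ (2 ^ (m - 3)))
    ∧ Nat.card (commutator G) = 2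
    ∧ Subgroup.center G = Subgroup.zpowers a
    ∧ IsCyclic (Subgroup.center G)
    ∧ Nat.card (Subgroup.center G) = 2 ^ (m - 2)
    ∧ nilClass G = 2 := by
  obtain ⟨n, rfl⟩ : ∃ n, m = n + 4 := ⟨m - 4, by omega⟩
  intro G a
  simp only [show n + 4 - 3 = n + 1 by omega, show n + 4 - 2 = n + 2 by omega]
  refine ⟨G4proof.card_G n, G4proof.commutator_G n, G4proof.card_commutator_G n,
    G4proof.center_G n, G4proof.center_isCyclic n, G4proof.card_center_G n,
    G4proof.nilClass_G n⟩
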